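/- If M_{0,w}^ε(|y|_+^2) > ε, then M_{p,w}^ε(|y|_-^2) = ε; conversely, if M_{p,w}^ε(|y|_-^2) > ε, then M_{0,w}^ε(|y|_+^2) = ε. That is, at most one of the two regularized means can exceed ε for any fixed y ∈ R^n. -/
import Mathlib


open Finset Real Filter Topology

noncomputable def M0 {n : ℕ} (ε : ℝ) (w : Fin n → ℕ) (z : Fin n → ℝ) : ℝ :=
  (ε ^ (∑ i, w i) + ∏ i, z i ^ w i) ^ ((1 : ℝ) / (∑ i, w i))

noncomputable def Mp {n : ℕ} (ε : ℝ) (p : ℕ) (w : Fin n → ℕ) (z : Fin n → ℝ) : ℝ :=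
  (ε ^ p + (1 / (∑ i, (w i : ℝ))) * ∑ i, (w i : ℝ) * z i ^ p) ^ ((1 : ℝ) / p)

noncomputable def posSq {n : ℕ} (y : Fin n → ℝ) : Fin n → ℝ := fun i => max (y i) 0 ^ 2

noncomputable def negSq {n : ℕ} (y : Fin n → ℝ) : Fin n → ℝ := fun i => min (y i) 0 ^ 2

noncomputable def hConj {n : ℕ} (ε : ℝ) (p : ℕ) (w : Fin n → ℕ) (y : Fin n → ℝ) : ℝ :=
  M0 ε w (posSq y) ^ ((1 : ℝ) / 2) - Mp ε p w (negSq y) ^ ((1 : ℝ) / 2)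

noncomputable def hDisj {n : ℕ} (ε : ℝ) (p : ℕ) (w : Fin n → ℕ) (y : Fin n → ℝ) : ℝ :=
  - hConj ε p w (fun i => - y i)

lemma eps_pow_rpow (ε : ℝ) (hε : 0 < ε) (k : ℕ) (hk : 0 < k) :
    ((ε ^ k : ℝ)) ^ ((1 : ℝ) / k) = ε := by
  rw [← Real.rpow_natCast ε k, ← Real.rpow_mul hε.le]
  rw [mul_one_div, div_self (Nat.cast_ne_zero.mpr hk.ne'), Real.rpow_one]

theorem means_mutually_exclusive {n : ℕ} (hn : 0 < n) (ε : ℝ) (hε : 0 < ε)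
    (p : ℕ) (hp : 0 < p) (w : Fin n → ℕ) (hw : ∀ i, 0 < w i) (y : Fin n → ℝ) :
    (ε < M0 ε w (posSq y) → Mp ε p w (negSq y) = ε) ∧
    (ε < Mp ε p w (negSq y) → M0 ε w (posSq y) = ε) := by
  have hW : 0 < ∑ i, w i := by
    obtain ⟨i⟩ := Fin.pos_iff_nonempty.mp hn
    exact Finset.sum_pos (fun j _ => hw j) ⟨i, Finset.mem_univ i⟩
  constructor
  · intro h
    -- the product must be positive
    have hP : 0 < ∏ i, posSq y i ^ w i := by
      by_contra hP
      push_neg at hP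
      have hP0 : ∏ i, posSq y i ^ w i = 0 := le_antisymm hP (Finset.prod_nonneg fun i _ => by unfold posSq; positivity)
      rw [M0, hP0, add_zero, eps_pow_rpow ε hε _ hW] at h
      exact lt_irrefl _ h
    have hall : ∀ i, 0 < y i := by
      intro i
      by_contra hyi
      push_neg at hyi
      have h0 : posSq y i = 0 := by simp [posSq, max_eq_right hyi]
      have : ∏ j, posSq y j ^ w j = 0 :=
        Finset.prod_eq_zero (Finset.mem_univ i) (by rw [h0, zero_pow (hw i).ne'])
      rw [this] at hP
      exact lt_irrefl _ hP
    have hneg : ∀ i, negSq y i = 0 := fun i => by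
      simp [negSq, min_eq_right (hall i).le]
    rw [Mp]
    have : ∑ i, (w i : ℝ) * negSq y i ^ p = 0 := by
      apply Finset.sum_eq_zero
      intro i _; rw [hneg i]; simp [zero_pow hp.ne']
    rw [this, mul_zero, add_zero, eps_pow_rpow ε hε p hp]
  · intro h
    have hS : 0 < ∑ i, (w i : ℝ) * negSq y i ^ p := by
      by_contra hS
      push_neg at hS
      have hS0 : ∑ i, (w i : ℝ) * negSq y i ^ p = 0 :=
        le_antisymm hS (Finset.sum_nonneg fun i _ => by unfold negSq; positivity)
      rw [Mp, hS0, mul_zero, add_zero, eps_pow_rpow ε hε p hp] at h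
      exact lt_irrefl _ h
    obtain ⟨i, -, hi⟩ := Finset.exists_lt_of_sum_lt (f := fun _ => (0:ℝ))
      (by simpa using hS)
    have hyi : y i < 0 := by
      by_contra hyi
      push_neg at hyi
      have h0 : negSq y i = 0 := by simp [negSq, min_eq_right hyi]
      rw [h0, zero_pow hp.ne', mul_zero] at hi
      exact lt_irrefl _ hi
    have hpos : posSq y i = 0 := by
      simp [posSq, max_eq_right hyi.le]
    rw [M0]
    have : ∏ j, posSq y j ^ w j = 0 :=
      Finset.prod_eq_zero (Finset.mem_univ i)
        (by rw [hpos, zero_pow (hw i).ne'])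
    rw [this, add_zero, eps_pow_rpow ε hε _ hW]
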